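/- Let p, q be relatively prime positive integers, G(n,p,q) = ⌊n/p⌋ + ⌊n/q⌋ − 2⌊n/(pq)⌋, G̃ its generalized inverse in n, and L^d(h,p,q) = max over 0 ≤ k ≤ h of (G̃(k,p,q) + G̃(h−k,p,q)). Then for every h ≥ 0: L^d(h,p,q) = L^d(h mod (p+q−2), p, q) + ⌊h/(p+q−2)⌋ · pq. Moreover L^d(p+q−3,p,q) = pq. -/

import Mathlib

/-- `G(n,p,q) = ⌊n/p⌋ + ⌊n/q⌋ − 2⌊n/(pq)⌋`. -/
def Gfun (n p q : ℕ) : ℕ := n / p + n / q - 2 * (n / (p * q))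

/-- `G̃(h,p,q) = min{n : G(n,p,q) > h}`, the generalized inverse of `G` in `n`. -/
noncomputable def Gtilde (h p q : ℕ) : ℕ := sInf {n : ℕ | h < Gfun n p q}

/-- `L^d(h,p,q) = max_{0 ≤ k ≤ h} (G̃(k,p,q) + G̃(h−k,p,q))`. -/
noncomputable def Ld (h p q : ℕ) : ℕ :=
  (Finset.range (h + 1)).sup (fun k => Gtilde k p q + Gtilde (h - k) p q)

namespace LdAux

variable {p q : ℕ}

lemma div_pq_le (hp : 1 < p) (hq : 1 < q) (n : ℕ) :
    2 * (n / (p * q)) ≤ n / p + n / q := by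
  have h1 : n / (p * q) ≤ n / p :=
    Nat.div_le_div_left (by nlinarith) (by omega)
  have h2 : n / (p * q) ≤ n / q :=
    Nat.div_le_div_left (by nlinarith) (by omega)
  omega

lemma Gfun_add (hp : 1 < p) (hq : 1 < q) (n : ℕ) :
    Gfun n p q + 2 * (n / (p * q)) = n / p + n / q := by
  have := div_pq_le hp hq n
  unfold Gfun
  omega

lemma Gfun_zero (hp : 1 < p) (hq : 1 < q) : Gfun 0 p q = 0 := by
  simp [Gfun]

lemma Gfun_succ (hp : 1 < p) (hq : 1 < q) (hcop : Nat.Coprime p q) (n : ℕ) :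
    Gfun n p q ≤ Gfun (n + 1) p q ∧ Gfun (n + 1) p q ≤ Gfun n p q + 1 := by
  have Ap := Nat.succ_div (a := n) (b := p)
  have Aq := Nat.succ_div (a := n) (b := q)
  have Apq := Nat.succ_div (a := n) (b := p * q)
  have B1 := Gfun_add hp hq n
  have B2 := Gfun_add hp hq (n + 1)
  by_cases h1 : p ∣ n + 1 <;> by_cases h2 : q ∣ n + 1
  · have h3 : p * q ∣ n + 1 := hcop.mul_dvd_of_dvd_of_dvd h1 h2
    rw [if_pos h1] at Ap; rw [if_pos h2] at Aq; rw [if_pos h3] at Apq; omega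
  · have h3 : ¬ p * q ∣ n + 1 := fun h => h2 (dvd_trans (Dvd.intro_left p rfl) h)
    rw [if_pos h1] at Ap; rw [if_neg h2] at Aq; rw [if_neg h3] at Apq; omega
  · have h3 : ¬ p * q ∣ n + 1 := fun h => h1 (dvd_trans (Dvd.intro q rfl) h)
    rw [if_neg h1] at Ap; rw [if_pos h2] at Aq; rw [if_neg h3] at Apq; omega
  · have h3 : ¬ p * q ∣ n + 1 := fun h => h1 (dvd_trans (Dvd.intro q rfl) h)
    rw [if_neg h1] at Ap; rw [if_neg h2] at Aq; rw [if_neg h3] at Apq; omega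

lemma Gfun_mono (hp : 1 < p) (hq : 1 < q) (hcop : Nat.Coprime p q) :
    Monotone (fun n => Gfun n p q) :=
  monotone_nat_of_le_succ (fun n => (Gfun_succ hp hq hcop n).1)

lemma Gfun_period (hp : 1 < p) (hq : 1 < q) (n : ℕ) :
    Gfun (n + p * q) p q = Gfun n p q + (p + q - 2) := by
  have e1 : (n + p * q) / p = n / p + q := Nat.add_mul_div_left n q (by omega)
  have e2 : (n + p * q) / q = n / q + p := by
    rw [mul_comm p q]; exact Nat.add_mul_div_left n p (by omega)
  have e3 : (n + p * q) / (p * q) = n / (p * q) + 1 :=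
    Nat.add_div_right n (by nlinarith)
  have B1 := Gfun_add hp hq n
  have B2 := Gfun_add hp hq (n + p * q)
  omega

lemma Gfun_mul_pq (hp : 1 < p) (hq : 1 < q) (k : ℕ) :
    Gfun (k * (p * q)) p q = k * (p + q - 2) := by
  induction k with
  | zero => simp [Gfun]
  | succ k ih =>
      have : (k + 1) * (p * q) = k * (p * q) + p * q := by ring
      rw [this, Gfun_period hp hq, ih]; ring

lemma Gfun_unbounded (hp : 1 < p) (hq : 1 < q) (h : ℕ) :
    ∃ n, h < Gfun n p q := by
  refine ⟨(h + 1) * (p * q), ?_⟩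
  rw [Gfun_mul_pq hp hq]
  have : (h + 1) * 1 ≤ (h + 1) * (p + q - 2) := Nat.mul_le_mul_left _ (by omega)
  omega

lemma Gtilde_mem (hp : 1 < p) (hq : 1 < q) (h : ℕ) :
    h < Gfun (Gtilde h p q) p q :=
  Nat.sInf_mem (Gfun_unbounded hp hq h)

lemma Gtilde_min {h n : ℕ} (hn : n < Gtilde h p q) : Gfun n p q ≤ h := by
  by_contra hc
  have hmem : n ∈ {n : ℕ | h < Gfun n p q} := by
    simp only [Set.mem_setOf_eq]; omega
  have : Gtilde h p q ≤ n := Nat.sInf_le hmem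
  omega

lemma Gtilde_pos (hp : 1 < p) (hq : 1 < q) (h : ℕ) : 1 ≤ Gtilde h p q := by
  by_contra hc
  have h0 : Gtilde h p q = 0 := by omega
  have := Gtilde_mem hp hq h
  rw [h0, Gfun_zero hp hq] at this
  omega

/-- If `G x + G y ≤ h` then `x + y + 2 ≤ Ld h`. -/
lemma le_Ld (hp : 1 < p) (hq : 1 < q) (hcop : Nat.Coprime p q) {h x y : ℕ}
    (hxy : Gfun x p q + Gfun y p q ≤ h) : x + y + 2 ≤ Ld h p q := by
  set k := Gfun x p q with hk
  have hkh : k ≤ h := le_trans (Nat.le_add_right _ _) hxy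
  have hx : x < Gtilde k p q := by
    by_contra hc
    push_neg at hc
    have h1 : Gfun (Gtilde k p q) p q ≤ Gfun x p q := Gfun_mono hp hq hcop hc
    have h2 := Gtilde_mem hp hq k
    omega
  have hy : y < Gtilde (h - k) p q := by
    by_contra hc
    push_neg at hc
    have h1 : Gfun (Gtilde (h - k) p q) p q ≤ Gfun y p q := Gfun_mono hp hq hcop hc
    have h2 := Gtilde_mem hp hq (h - k)
    omega
  have hle : Gtilde k p q + Gtilde (h - k) p q ≤ Ld h p q := by
    unfold Ld
    exact Finset.le_sup (f := fun j => Gtilde j p q + Gtilde (h - j) p q)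
      (Finset.mem_range.mpr (show k < h + 1 by omega))
  omega

/-- `Ld h = x + y + 2` for some `x, y` with `G x + G y ≤ h`. -/
lemma Ld_eq (hp : 1 < p) (hq : 1 < q) (h : ℕ) :
    ∃ x y, Gfun x p q + Gfun y p q ≤ h ∧ Ld h p q = x + y + 2 := by
  obtain ⟨k, hk, hsup⟩ := Finset.exists_mem_eq_sup (Finset.range (h + 1))
    ⟨0, by simp⟩ (fun k => Gtilde k p q + Gtilde (h - k) p q)
  have hk' : k ≤ h := by have := Finset.mem_range.mp hk; omega
  have p1 := Gtilde_pos hp hq k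
  have p2 := Gtilde_pos hp hq (h - k)
  refine ⟨Gtilde k p q - 1, Gtilde (h - k) p q - 1, ?_, ?_⟩
  · have a1 : Gfun (Gtilde k p q - 1) p q ≤ k := Gtilde_min (by omega)
    have a2 : Gfun (Gtilde (h - k) p q - 1) p q ≤ h - k := Gtilde_min (by omega)
    omega
  · show Ld h p q = _
    unfold Ld
    rw [hsup]
    omega

/-- `(d*s - 1 - n) / d = s - 1 - n/d` for `n < d*s`. -/
lemma sub_div {d s : ℕ} (hd : 0 < d) (n : ℕ) (hn : n < d * s) :
    (d * s - 1 - n) / d = s - 1 - n / d := by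
  set u := n / d with hu
  set r := n % d with hr
  have hdm : d * u + r = n := Nat.div_add_mod n d
  have hrd : r < d := Nat.mod_lt _ hd
  have hus : u < s := by
    rw [hu, Nat.div_lt_iff_lt_mul hd, mul_comm]; exact hn
  set u' := s - 1 - u with hu'
  set r' := d - 1 - r with hr'
  have hq2 : s = u + u' + 1 := by omega
  have hp2 : d = r + r' + 1 := by omega
  have e : d * u' + r' + (n + 1) = d * s := by
    calc d * u' + r' + (n + 1) = d * u' + r' + (d * u + r + 1) := by rw [hdm]
      _ = d * (u + u') + (r + r' + 1) := by ring
      _ = d * (u + u') + d := by rw [← hp2]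
      _ = d * (u + u' + 1) := by ring
      _ = d * s := by rw [← hq2]
  have e2 : d * s - 1 - n = d * u' + r' := by omega
  rw [e2, Nat.mul_add_div hd, Nat.div_eq_of_lt (by omega)]
  omega

/-- Reflection: `G n + G (pq - 1 - n) = p + q - 2` for `n < pq`. -/
lemma Gfun_refl (hp : 1 < p) (hq : 1 < q) {n : ℕ} (hn : n < p * q) :
    Gfun n p q + Gfun (p * q - 1 - n) p q = p + q - 2 := by
  have hpq : 0 < p * q := by positivity
  have h1 : n / (p * q) = 0 := Nat.div_eq_of_lt hn
  have h2 : (p * q - 1 - n) / (p * q) = 0 := Nat.div_eq_of_lt (by omega)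
  have dp := sub_div (show 0 < p by omega) n hn
  have dq := sub_div (show 0 < q by omega) n (show n < q * p by rw [mul_comm]; exact hn)
  rw [mul_comm q p] at dq
  have bp : n / p < q := by rw [Nat.div_lt_iff_lt_mul (show 0 < p by omega), mul_comm]; exact hn
  have bq : n / q < p := by rw [Nat.div_lt_iff_lt_mul (show 0 < q by omega)]; exact hn
  have gn : Gfun n p q = n / p + n / q := by unfold Gfun; rw [h1]; simp
  have gnn : Gfun (p * q - 1 - n) p q = (q - 1 - n / p) + (p - 1 - n / q) := by
    unfold Gfun; rw [h2, dp, dq]; simp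
  rw [gn, gnn]
  omega

/-- Key inequality: `G a + G b ≤ G (a+b+1)` as long as `a+b+1 < pq`. -/
lemma Gfun_superadd (hp : 1 < p) (hq : 1 < q) {a b : ℕ} (hab : a + b + 1 < p * q) :
    Gfun a p q + Gfun b p q ≤ Gfun (a + b + 1) p q := by
  have h1 : a / (p * q) = 0 := Nat.div_eq_of_lt (by omega)
  have h2 : b / (p * q) = 0 := Nat.div_eq_of_lt (by omega)
  have h3 : (a + b + 1) / (p * q) = 0 := Nat.div_eq_of_lt hab
  have key : ∀ d : ℕ, 0 < d → a / d + b / d ≤ (a + b + 1) / d := by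
    intro d hd
    rw [Nat.le_div_iff_mul_le hd, add_mul]
    have := Nat.div_mul_le_self a d
    have := Nat.div_mul_le_self b d
    omega
  have kp := key p (by omega)
  have kq := key q (by omega)
  have ga : Gfun a p q = a / p + a / q := by unfold Gfun; rw [h1]; simp
  have gb : Gfun b p q = b / p + b / q := by unfold Gfun; rw [h2]; simp
  have gs : Gfun (a + b + 1) p q = (a + b + 1) / p + (a + b + 1) / q := by
    unfold Gfun; rw [h3]; simp
  rw [ga, gb, gs]
  omega

lemma Gtilde_period (hp : 1 < p) (hq : 1 < q) (hcop : Nat.Coprime p q) (h : ℕ) :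
    Gtilde (h + (p + q - 2)) p q = Gtilde h p q + p * q := by
  apply le_antisymm
  · apply Nat.sInf_le
    show h + (p + q - 2) < Gfun (Gtilde h p q + p * q) p q
    rw [Gfun_period hp hq]
    have := Gtilde_mem hp hq h
    omega
  · apply le_csInf (Gfun_unbounded hp hq _)
    intro n hn
    have hn' : h + (p + q - 2) < Gfun n p q := hn
    clear hn
    by_cases hc : n < p * q
    · exfalso
      have h1 : Gfun n p q ≤ Gfun (p * q) p q := Gfun_mono hp hq hcop (by omega)
      have h2 : Gfun (p * q) p q = p + q - 2 := by
        have := Gfun_period hp hq 0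
        simpa [Gfun_zero hp hq] using this
      omega
    · push_neg at hc
      have h1 : Gfun (n - p * q + p * q) p q = Gfun (n - p * q) p q + (p + q - 2) :=
        Gfun_period hp hq _
      rw [Nat.sub_add_cancel hc] at h1
      have h2 : h < Gfun (n - p * q) p q := by omega
      have h3 : Gtilde h p q ≤ n - p * q := Nat.sInf_le h2
      omega

lemma Ld_add (hp : 1 < p) (hq : 1 < q) (hcop : Nat.Coprime p q) (h : ℕ) :
    Ld (h + (p + q - 2)) p q = Ld h p q + p * q := by
  have hM2' : 2 ≤ p * q := by nlinarith
  set m := p + q - 2 with hm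
  set M := p * q with hM
  have hM2 : 2 ≤ M := hM2'

  apply le_antisymm
  · obtain ⟨x, y, hG, hL⟩ := Ld_eq hp hq (h + m)
    obtain ⟨x', y', hG', hL'⟩ := Ld_eq hp hq h
    have hLd2 : 2 ≤ Ld h p q := by omega
    rw [hL]
    by_cases hx : M ≤ x
    · have e : Gfun (x - M + M) p q = Gfun (x - M) p q + m := Gfun_period hp hq _
      rw [Nat.sub_add_cancel hx] at e
      have : (x - M) + y + 2 ≤ Ld h p q := le_Ld hp hq hcop (by omega)
      omega
    by_cases hy : M ≤ y
    · have e : Gfun (y - M + M) p q = Gfun (y - M) p q + m := Gfun_period hp hq _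
      rw [Nat.sub_add_cancel hy] at e
      have : x + (y - M) + 2 ≤ Ld h p q := le_Ld hp hq hcop (by omega)
      omega
    push_neg at hx hy
    by_cases hs : x + y ≤ M
    · omega
    · push_neg at hs
      set y' := M - 1 - y with hy'
      have hrefl : Gfun y p q + Gfun y' p q = m := Gfun_refl hp hq hy
      have hyx : y' + 1 < x := by omega
      have ex : y' + (x - y' - 1) + 1 = x := by omega
      have hsup := Gfun_superadd hp hq (a := y') (b := x - y' - 1) (by omega)
      rw [ex] at hsup
      have hfin : Gfun (x - y' - 1) p q + Gfun 0 p q ≤ h := by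
        rw [Gfun_zero hp hq]; omega
      have := le_Ld hp hq hcop hfin
      omega
  · obtain ⟨x, y, hG, hL⟩ := Ld_eq hp hq h
    have e : Gfun (x + M) p q = Gfun x p q + m := Gfun_period hp hq _
    have : (x + M) + y + 2 ≤ Ld (h + m) p q := le_Ld hp hq hcop (by omega)
    omega

lemma Ld_iter (hp : 1 < p) (hq : 1 < q) (hcop : Nat.Coprime p q) (r j : ℕ) :
    Ld (r + (p + q - 2) * j) p q = Ld r p q + j * (p * q) := by
  induction j with
  | zero => simp
  | succ j ih =>
      have e : r + (p + q - 2) * (j + 1) = (r + (p + q - 2) * j) + (p + q - 2) := by ring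
      rw [e, Ld_add hp hq hcop, ih]; ring

end LdAux

/-- For coprime `p, q > 1` and every `h ≥ 0`:
`L^d(h,p,q) = L^d(h mod (p+q−2),p,q) + ⌊h/(p+q−2)⌋·pq`; moreover `L^d(p+q−3,p,q) = pq`. -/
theorem Ld_reduce (p q h : ℕ) (hp : 1 < p) (hq : 1 < q) (hcop : Nat.Coprime p q) :
    Ld h p q = Ld (h % (p + q - 2)) p q + h / (p + q - 2) * (p * q) ∧
      Ld (p + q - 3) p q = p * q := by
  have hpq : 2 ≤ p * q := by nlinarith
  have hne : p ≠ q := by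
    intro he
    rw [he] at hcop
    rw [Nat.Coprime, Nat.gcd_self] at hcop
    omega
  constructor
  · have e : h = h % (p + q - 2) + (p + q - 2) * (h / (p + q - 2)) :=
      (Nat.mod_add_div h (p + q - 2)).symm
    calc Ld h p q = Ld (h % (p + q - 2) + (p + q - 2) * (h / (p + q - 2))) p q := by rw [← e]
      _ = Ld (h % (p + q - 2)) p q + h / (p + q - 2) * (p * q) :=
          LdAux.Ld_iter hp hq hcop _ _
  · set m := p + q - 2 with hm
    have hm3 : p + q - 3 = m - 1 := by omega
    have hm2 : 2 ≤ m := by omega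
    rw [hm3]
    apply le_antisymm
    · obtain ⟨x, y, hG, hL⟩ := LdAux.Ld_eq hp hq (m - 1)
      rw [hL]
      have hx : x < p * q := by
        by_contra hc
        push_neg at hc
        have e : Gfun (x - p * q + p * q) p q = Gfun (x - p * q) p q + m :=
          LdAux.Gfun_period hp hq _
        rw [Nat.sub_add_cancel hc] at e
        omega
      have hy : y < p * q := by
        by_contra hc
        push_neg at hc
        have e : Gfun (y - p * q + p * q) p q = Gfun (y - p * q) p q + m :=
          LdAux.Gfun_period hp hq _
        rw [Nat.sub_add_cancel hc] at e
        omega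
      by_contra hc
      push_neg at hc
      -- x + y ≥ M - 1
      set y' := p * q - 1 - y with hy'
      have hrefl : Gfun y p q + Gfun y' p q = m := LdAux.Gfun_refl hp hq hy
      have hxy' : y' ≤ x := by omega
      have hmono : Gfun y' p q ≤ Gfun x p q := LdAux.Gfun_mono hp hq hcop hxy'
      omega
    · -- construct x = pq - 1 - c, y = c - 1 with c = min p q
      set c := min p q with hc
      have hc2 : 2 ≤ c := by omega
      have hcpq : c < p * q := by
        rcases le_total p q with hle | hle
        · have : c = p := by omega
          rw [this]; nlinarith
        · have : c = q := by omega
          rw [this]; nlinarith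
      have hGc : Gfun c p q = 1 := by
        have h0 : c / (p * q) = 0 := Nat.div_eq_of_lt hcpq
        rcases Nat.lt_or_ge p q with hlt | hge
        · have hcp : c = p := by omega
          have e1 : c / p = 1 := by rw [hcp, Nat.div_self (by omega)]
          have e2 : c / q = 0 := Nat.div_eq_of_lt (by omega)
          unfold Gfun; rw [e1, e2, h0]
        · have hlt : q < p := by omega
          have hcq : c = q := by omega
          have e1 : c / q = 1 := by rw [hcq, Nat.div_self (by omega)]
          have e2 : c / p = 0 := Nat.div_eq_of_lt (by omega)
          unfold Gfun; rw [e1, e2, h0]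
      have hGc1 : Gfun (c - 1) p q = 0 := by
        have e1 : (c - 1) / p = 0 := Nat.div_eq_of_lt (by omega)
        have e2 : (c - 1) / q = 0 := Nat.div_eq_of_lt (by omega)
        have e3 : (c - 1) / (p * q) = 0 := Nat.div_eq_of_lt (by omega)
        unfold Gfun; rw [e1, e2, e3]
      have hrefl : Gfun c p q + Gfun (p * q - 1 - c) p q = m := LdAux.Gfun_refl hp hq hcpq
      have hsum : Gfun (p * q - 1 - c) p q + Gfun (c - 1) p q ≤ m - 1 := by omega
      have := LdAux.le_Ld hp hq hcop hsum
      omega
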